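/- Fix an integer n ≥ 2 and a real c₁ > 0 with 1 ≤ c₁·ln n ≤ n, and set Δ = c₁·ln n / n and t = Δ/4. Let α ∈ (0, 3/2), and let N ~ Poisson(n·p) where p ∈ [Δ, 1]. Then the bias of U_α evaluated at the empirical frequency N/n satisfies | E[U_α(N/n)] − p^α | ≤ 17/( n^α·(c₁·ln n)^{2−α} ) + (8310·(1+α)/(α·(2−α)))·p^α·n^{−c₁/8}. -/

import Mathlib

open scoped BigOperators

/-- The interpolation polynomial `g(y; a)` of Lemma 1. -/
noncomputable def gfun (a y : ℝ) : ℝ :=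
  126 * (y / a) ^ 5 - 420 * (y / a) ^ 6 + 540 * (y / a) ^ 7
    - 315 * (y / a) ^ 8 + 70 * (y / a) ^ 9

/-- The interpolation function `I_n` with threshold `t`. -/
noncomputable def interp (t x : ℝ) : ℝ :=
  if x ≤ t then 0 else if x < 2 * t then gfun t (x - t) else 1

/-- The "smooth regime" estimator `U_α`. -/
noncomputable def Ualpha (n : ℕ) (t α x : ℝ) : ℝ :=
  if x = 0 then 0
  else interp t x * (x ^ α + (α * (1 - α) / (2 * (n : ℝ))) * x ^ (α - 1))

lemma exp_tsum (x : ℝ) : (∑' n : ℕ, x ^ n / n.factorial) = Real.exp x := by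
  rw [Real.exp_eq_exp_ℝ, NormedSpace.exp_eq_tsum_div]

section moments

variable (lam : ℝ)

lemma aux_shift (k : ℕ) (c : ℝ) (f : ℕ → ℝ)
    (h0 : ∀ j, j < k → f j = 0)
    (hs : ∀ j, f (j + k) = c * (lam ^ j / (j.factorial : ℝ))) :
    Summable f ∧ ∑' j, f j = c * Real.exp lam := by
  have hg : Function.Injective (fun j : ℕ => j + k) := fun a b h => by
    simpa using h
  have hrange : ∀ x ∉ Set.range (fun j : ℕ => j + k), f x = 0 := by
    intro x hx
    apply h0
    by_contra hlt
    exact hx ⟨x - k, show x - k + k = x by omega⟩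
  have hcomp : (f ∘ fun j : ℕ => j + k) = fun j => c * (lam ^ j / (j.factorial : ℝ)) :=
    funext fun j => hs j
  have hsum : Summable (f ∘ fun j : ℕ => j + k) := by
    rw [hcomp]; exact (Real.summable_pow_div_factorial lam).mul_left c
  have hS : Summable f := (hg.summable_iff hrange).mp hsum
  refine ⟨hS, ?_⟩
  have := hg.tsum_eq (f := f) (by
    intro x hx
    by_contra hmem
    exact hx (hrange x hmem))
  rw [← this]
  calc ∑' j : ℕ, f (j + k) = ∑' j : ℕ, c * (lam ^ j / (j.factorial : ℝ)) := by
        exact tsum_congr hs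
    _ = c * Real.exp lam := by rw [tsum_mul_left, exp_tsum]

lemma desc0 : Summable (fun j : ℕ => lam ^ j / (j.factorial : ℝ)) ∧
    ∑' j : ℕ, lam ^ j / (j.factorial : ℝ) = 1 * Real.exp lam := by
  have := aux_shift lam 0 1 (fun j => lam ^ j / (j.factorial : ℝ))
    (by intro j h; omega) (by intro j; simp)
  exact this

lemma desc1 : Summable (fun j : ℕ => (j : ℝ) * (lam ^ j / (j.factorial : ℝ))) ∧
    ∑' j : ℕ, (j : ℝ) * (lam ^ j / (j.factorial : ℝ)) = lam ^ 1 * Real.exp lam := by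
  apply aux_shift lam 1 (lam ^ 1)
  · intro j h
    interval_cases j <;> simp
  · intro j
    have hne : ((j + 1).factorial : ℝ) ≠ 0 := Nat.cast_ne_zero.mpr (Nat.factorial_ne_zero _)
    have hne' : ((j).factorial : ℝ) ≠ 0 := Nat.cast_ne_zero.mpr (Nat.factorial_ne_zero _)
    have hf : ((j + 1).factorial : ℝ) = ((j : ℝ) + 1) * (j.factorial : ℝ) := by
      rw [show j + 1 = j + 1 from rfl, Nat.factorial_succ]; push_cast; ring
    simp only [hf]; field_simp; push_cast
    ring

lemma desc2 : Summable (fun j : ℕ => (j : ℝ) * ((j : ℝ) - 1) * (lam ^ j / (j.factorial : ℝ))) ∧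
    ∑' j : ℕ, (j : ℝ) * ((j : ℝ) - 1) * (lam ^ j / (j.factorial : ℝ)) = lam ^ 2 * Real.exp lam := by
  apply aux_shift lam 2 (lam ^ 2)
  · intro j h
    interval_cases j <;> norm_num
  · intro j
    have hne' : ((j).factorial : ℝ) ≠ 0 := Nat.cast_ne_zero.mpr (Nat.factorial_ne_zero _)
    have hf : ((j + 2).factorial : ℝ) = ((j : ℝ) + 2) * (((j : ℝ) + 1) * (j.factorial : ℝ)) := by
      rw [show j + 2 = (j + 1) + 1 from rfl, Nat.factorial_succ, Nat.factorial_succ]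
      push_cast; ring
    have hne : ((j + 2).factorial : ℝ) ≠ 0 := Nat.cast_ne_zero.mpr (Nat.factorial_ne_zero _)
    simp only [hf]; field_simp
    push_cast
    ring

lemma desc3 : Summable (fun j : ℕ =>
      (j : ℝ) * ((j : ℝ) - 1) * ((j : ℝ) - 2) * (lam ^ j / (j.factorial : ℝ))) ∧
    ∑' j : ℕ, (j : ℝ) * ((j : ℝ) - 1) * ((j : ℝ) - 2) * (lam ^ j / (j.factorial : ℝ))
      = lam ^ 3 * Real.exp lam := by
  apply aux_shift lam 3 (lam ^ 3)
  · intro j h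
    interval_cases j <;> norm_num
  · intro j
    have hne' : ((j).factorial : ℝ) ≠ 0 := Nat.cast_ne_zero.mpr (Nat.factorial_ne_zero _)
    have hf : ((j + 3).factorial : ℝ)
        = ((j : ℝ) + 3) * (((j : ℝ) + 2) * (((j : ℝ) + 1) * (j.factorial : ℝ))) := by
      rw [show j + 3 = ((j + 1) + 1) + 1 from rfl, Nat.factorial_succ, Nat.factorial_succ,
        Nat.factorial_succ]
      push_cast; ring
    have hne : ((j + 3).factorial : ℝ) ≠ 0 := Nat.cast_ne_zero.mpr (Nat.factorial_ne_zero _)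
    simp only [hf]; field_simp
    push_cast
    ring

lemma desc4 : Summable (fun j : ℕ =>
      (j : ℝ) * ((j : ℝ) - 1) * ((j : ℝ) - 2) * ((j : ℝ) - 3) * (lam ^ j / (j.factorial : ℝ))) ∧
    ∑' j : ℕ, (j : ℝ) * ((j : ℝ) - 1) * ((j : ℝ) - 2) * ((j : ℝ) - 3)
        * (lam ^ j / (j.factorial : ℝ)) = lam ^ 4 * Real.exp lam := by
  apply aux_shift lam 4 (lam ^ 4)
  · intro j h
    interval_cases j <;> norm_num
  · intro j
    have hne' : ((j).factorial : ℝ) ≠ 0 := Nat.cast_ne_zero.mpr (Nat.factorial_ne_zero _)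
    have hf : ((j + 4).factorial : ℝ)
        = ((j : ℝ) + 4) * (((j : ℝ) + 3) * (((j : ℝ) + 2) * (((j : ℝ) + 1) * (j.factorial : ℝ)))) := by
      rw [show j + 4 = (((j + 1) + 1) + 1) + 1 from rfl, Nat.factorial_succ, Nat.factorial_succ,
        Nat.factorial_succ, Nat.factorial_succ]
      push_cast; ring
    have hne : ((j + 4).factorial : ℝ) ≠ 0 := Nat.cast_ne_zero.mpr (Nat.factorial_ne_zero _)
    simp only [hf]; field_simp
    push_cast
    ring

end moments
section centralmoments

variable (lam : ℝ)

lemma cmom1 : Summable (fun j : ℕ => lam ^ j / (j.factorial : ℝ) * ((j : ℝ) - lam) ^ 1) ∧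
    ∑' j : ℕ, lam ^ j / (j.factorial : ℝ) * ((j : ℝ) - lam) ^ 1 = 0 * Real.exp lam := by
  obtain ⟨s0, t0⟩ := desc0 lam
  obtain ⟨s1, t1⟩ := desc1 lam
  have e : (fun j : ℕ => lam ^ j / (j.factorial : ℝ) * ((j : ℝ) - lam) ^ 1)
      = fun j : ℕ => ((j : ℝ) * (lam ^ j / (j.factorial : ℝ)))
          + ((-lam) * (lam ^ j / (j.factorial : ℝ))) := by
    funext j; ring
  constructor
  · rw [e]; exact s1.add (s0.mul_left _)
  · rw [e, Summable.tsum_add s1 (s0.mul_left _), tsum_mul_left, t0, t1]; ring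

lemma cmom2 : Summable (fun j : ℕ => lam ^ j / (j.factorial : ℝ) * ((j : ℝ) - lam) ^ 2) ∧
    ∑' j : ℕ, lam ^ j / (j.factorial : ℝ) * ((j : ℝ) - lam) ^ 2 = lam * Real.exp lam := by
  obtain ⟨s0, t0⟩ := desc0 lam
  obtain ⟨s1, t1⟩ := desc1 lam
  obtain ⟨s2, t2⟩ := desc2 lam
  have e : (fun j : ℕ => lam ^ j / (j.factorial : ℝ) * ((j : ℝ) - lam) ^ 2)
      = fun j : ℕ => ((j : ℝ) * ((j : ℝ) - 1) * (lam ^ j / (j.factorial : ℝ)))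
          + ((1 - 2 * lam) * ((j : ℝ) * (lam ^ j / (j.factorial : ℝ)))
          + (lam ^ 2) * (lam ^ j / (j.factorial : ℝ))) := by
    funext j; ring
  constructor
  · rw [e]; exact s2.add ((s1.mul_left _).add (s0.mul_left _))
  · rw [e, Summable.tsum_add s2 ((s1.mul_left _).add (s0.mul_left _)),
      Summable.tsum_add (s1.mul_left _) (s0.mul_left _), tsum_mul_left, tsum_mul_left, t0, t1, t2]
    ring

lemma cmom3 : Summable (fun j : ℕ => lam ^ j / (j.factorial : ℝ) * ((j : ℝ) - lam) ^ 3) ∧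
    ∑' j : ℕ, lam ^ j / (j.factorial : ℝ) * ((j : ℝ) - lam) ^ 3 = lam * Real.exp lam := by
  obtain ⟨s0, t0⟩ := desc0 lam
  obtain ⟨s1, t1⟩ := desc1 lam
  obtain ⟨s2, t2⟩ := desc2 lam
  obtain ⟨s3, t3⟩ := desc3 lam
  have e : (fun j : ℕ => lam ^ j / (j.factorial : ℝ) * ((j : ℝ) - lam) ^ 3)
      = fun j : ℕ => ((j : ℝ) * ((j : ℝ) - 1) * ((j : ℝ) - 2) * (lam ^ j / (j.factorial : ℝ)))
          + ((3 - 3 * lam) * ((j : ℝ) * ((j : ℝ) - 1) * (lam ^ j / (j.factorial : ℝ)))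
          + ((1 - 3 * lam + 3 * lam ^ 2) * ((j : ℝ) * (lam ^ j / (j.factorial : ℝ)))
          + (-lam ^ 3) * (lam ^ j / (j.factorial : ℝ)))) := by
    funext j; ring
  constructor
  · rw [e]; exact s3.add ((s2.mul_left _).add ((s1.mul_left _).add (s0.mul_left _)))
  · rw [e, Summable.tsum_add s3 ((s2.mul_left _).add ((s1.mul_left _).add (s0.mul_left _))),
      Summable.tsum_add (s2.mul_left _) ((s1.mul_left _).add (s0.mul_left _)),
      Summable.tsum_add (s1.mul_left _) (s0.mul_left _),
      tsum_mul_left, tsum_mul_left, tsum_mul_left, t0, t1, t2, t3]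
    ring

lemma cmom4 : Summable (fun j : ℕ => lam ^ j / (j.factorial : ℝ) * ((j : ℝ) - lam) ^ 4) ∧
    ∑' j : ℕ, lam ^ j / (j.factorial : ℝ) * ((j : ℝ) - lam) ^ 4
      = (3 * lam ^ 2 + lam) * Real.exp lam := by
  obtain ⟨s0, t0⟩ := desc0 lam
  obtain ⟨s1, t1⟩ := desc1 lam
  obtain ⟨s2, t2⟩ := desc2 lam
  obtain ⟨s3, t3⟩ := desc3 lam
  obtain ⟨s4, t4⟩ := desc4 lam
  have e : (fun j : ℕ => lam ^ j / (j.factorial : ℝ) * ((j : ℝ) - lam) ^ 4)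
      = fun j : ℕ => ((j : ℝ) * ((j : ℝ) - 1) * ((j : ℝ) - 2) * ((j : ℝ) - 3)
            * (lam ^ j / (j.factorial : ℝ)))
          + ((6 - 4 * lam) * ((j : ℝ) * ((j : ℝ) - 1) * ((j : ℝ) - 2)
            * (lam ^ j / (j.factorial : ℝ)))
          + ((7 - 12 * lam + 6 * lam ^ 2) * ((j : ℝ) * ((j : ℝ) - 1)
            * (lam ^ j / (j.factorial : ℝ)))
          + ((1 - 4 * lam + 6 * lam ^ 2 - 4 * lam ^ 3) * ((j : ℝ) * (lam ^ j / (j.factorial : ℝ)))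
          + (lam ^ 4) * (lam ^ j / (j.factorial : ℝ))))) := by
    funext j; ring
  constructor
  · rw [e]
    exact s4.add ((s3.mul_left _).add ((s2.mul_left _).add ((s1.mul_left _).add (s0.mul_left _))))
  · rw [e, Summable.tsum_add s4 ((s3.mul_left _).add ((s2.mul_left _).add ((s1.mul_left _).add
        (s0.mul_left _)))),
      Summable.tsum_add (s3.mul_left _) ((s2.mul_left _).add ((s1.mul_left _).add (s0.mul_left _))),
      Summable.tsum_add (s2.mul_left _) ((s1.mul_left _).add (s0.mul_left _)),
      Summable.tsum_add (s1.mul_left _) (s0.mul_left _),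
      tsum_mul_left, tsum_mul_left, tsum_mul_left, tsum_mul_left, t0, t1, t2, t3, t4]
    ring

end centralmoments
section scaled

lemma cmom0 (lam : ℝ) :
    Summable (fun j : ℕ => lam ^ j / (j.factorial : ℝ) * ((j : ℝ) - lam) ^ 0) ∧
    ∑' j : ℕ, lam ^ j / (j.factorial : ℝ) * ((j : ℝ) - lam) ^ 0 = 1 * Real.exp lam := by
  obtain ⟨s0, t0⟩ := desc0 lam
  have e : (fun j : ℕ => lam ^ j / (j.factorial : ℝ) * ((j : ℝ) - lam) ^ 0)
      = fun j : ℕ => lam ^ j / (j.factorial : ℝ) := by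
    funext j; ring
  rw [e]
  exact ⟨s0, t0⟩

lemma wmom_of (n : ℕ) (hn : (0:ℝ) < n) (p : ℝ) (m : ℕ) (v : ℝ)
    (h : Summable (fun j : ℕ =>
        ((n:ℝ)*p) ^ j / (j.factorial : ℝ) * ((j : ℝ) - (n:ℝ)*p) ^ m) ∧
      ∑' j : ℕ, ((n:ℝ)*p) ^ j / (j.factorial : ℝ) * ((j : ℝ) - (n:ℝ)*p) ^ m
        = v * Real.exp ((n:ℝ)*p)) :
    Summable (fun j : ℕ => Real.exp (-((n:ℝ)*p)) * ((n:ℝ)*p) ^ j / (j.factorial : ℝ)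
        * ((j:ℝ)/(n:ℝ) - p) ^ m) ∧
    ∑' j : ℕ, Real.exp (-((n:ℝ)*p)) * ((n:ℝ)*p) ^ j / (j.factorial : ℝ)
        * ((j:ℝ)/(n:ℝ) - p) ^ m = v / (n:ℝ) ^ m := by
  have hne : (n:ℝ) ≠ 0 := ne_of_gt hn
  have e : (fun j : ℕ => Real.exp (-((n:ℝ)*p)) * ((n:ℝ)*p) ^ j / (j.factorial : ℝ)
        * ((j:ℝ)/(n:ℝ) - p) ^ m)
      = fun j : ℕ => (Real.exp (-((n:ℝ)*p)) / (n:ℝ) ^ m)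
          * (((n:ℝ)*p) ^ j / (j.factorial : ℝ) * ((j : ℝ) - (n:ℝ)*p) ^ m) := by
    funext j
    have hx : (j:ℝ)/(n:ℝ) - p = ((j:ℝ) - (n:ℝ)*p) / (n:ℝ) := by field_simp
    rw [hx, div_pow]
    have hfne : ((j.factorial : ℝ)) ≠ 0 := Nat.cast_ne_zero.mpr (Nat.factorial_ne_zero _)
    field_simp
  constructor
  · rw [e]; exact h.1.mul_left _
  · rw [e, tsum_mul_left, h.2, Real.exp_neg]
    have : Real.exp ((n:ℝ)*p) ≠ 0 := Real.exp_ne_zero _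
    field_simp

lemma chernoff_sum (lam : ℝ) :
    Summable (fun j : ℕ => Real.exp (-lam) * lam ^ j / (j.factorial : ℝ)
        * Real.exp (Real.log 2 * (lam/2 - (j:ℝ)))) ∧
    ∑' j : ℕ, Real.exp (-lam) * lam ^ j / (j.factorial : ℝ)
        * Real.exp (Real.log 2 * (lam/2 - (j:ℝ)))
      = Real.exp (-lam) * Real.exp (Real.log 2 * (lam/2)) * Real.exp (lam/2) := by
  have key : ∀ j : ℕ, Real.exp (Real.log 2 * (lam/2 - (j:ℝ)))
      = Real.exp (Real.log 2 * (lam/2)) * ((1:ℝ)/2) ^ j := by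
    intro j
    rw [mul_sub, Real.exp_sub]
    have h2 : Real.exp (Real.log 2 * (j:ℝ)) = 2 ^ j := by
      rw [mul_comm, Real.exp_nat_mul, Real.exp_log two_pos]
    rw [h2, div_eq_mul_inv, ← inv_pow, one_div]
  have e : (fun j : ℕ => Real.exp (-lam) * lam ^ j / (j.factorial : ℝ)
        * Real.exp (Real.log 2 * (lam/2 - (j:ℝ))))
      = fun j : ℕ => (Real.exp (-lam) * Real.exp (Real.log 2 * (lam/2)))
          * ((lam/2) ^ j / (j.factorial : ℝ)) := by
    funext j
    have hpow : (lam/2) ^ j = lam ^ j * ((1:ℝ)/2) ^ j := by rw [← mul_pow, mul_one_div]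
    rw [key j, hpow]
    ring
  constructor
  · rw [e]; exact (Real.summable_pow_div_factorial (lam/2)).mul_left _
  · rw [e, tsum_mul_left, exp_tsum]

end scaled
section taylor

lemma mvt_poly_aux (g g' : ℝ → ℝ) (p x C : ℝ) (k : ℕ) (hpx : p ≤ x)
    (hder : ∀ y ∈ Set.Icc p x, HasDerivAt g (g' y) y)
    (hbd : ∀ y ∈ Set.Icc p x, |g' y| ≤ C * |y - p| ^ k)
    (hgp : g p = 0) :
    |g x| ≤ C / (k + 1) * |x - p| ^ (k + 1) := by
  have hk1 : ((k : ℝ) + 1) ≠ 0 := by positivity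
  have hφ : ∀ y : ℝ, HasDerivAt (fun y => C / (k + 1) * (y - p) ^ (k + 1))
      (C * (y - p) ^ k) y := by
    intro y
    have h1 : HasDerivAt (fun y : ℝ => (y - p) ^ (k + 1))
        (((k : ℝ) + 1) * (y - p) ^ k * 1) y := by
      have := ((hasDerivAt_id y).sub_const p).fun_pow (k + 1)
      simpa using this
    have h2 := h1.const_mul (C / ((k : ℝ) + 1))
    refine h2.congr_deriv ?_
    rw [mul_one, ← mul_assoc, div_mul_cancel₀ _ hk1]
  have key : ∀ s : ℝ, s = 1 ∨ s = -1 →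
      s * g x ≤ C / (k + 1) * (x - p) ^ (k + 1) := by
    intro s hs
    have hmono : MonotoneOn (fun y => C / (k + 1) * (y - p) ^ (k + 1) - s * g y)
        (Set.Icc p x) := by
      apply monotoneOn_of_deriv_nonneg (convex_Icc p x)
      · intro y hy
        exact ((hφ y).sub ((hder y hy).const_mul s)).continuousAt.continuousWithinAt
      · intro y hy
        rw [interior_Icc] at hy
        exact ((hφ y).sub ((hder y (Set.mem_Icc_of_Ioo hy)).const_mul s)).differentiableAt.differentiableWithinAt
      · intro y hy
        rw [interior_Icc] at hy
        have hymem : y ∈ Set.Icc p x := Set.mem_Icc_of_Ioo hy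
        rw [((hφ y).fun_sub ((hder y hymem).const_mul s)).deriv]
        have hb := hbd y hymem
        have habs : |y - p| = y - p := abs_of_nonneg (by linarith [hy.1.le])
        rw [habs] at hb
        have := abs_le.mp hb
        rcases hs with h | h <;> rw [h] <;> simp <;> nlinarith [this.1, this.2]
    have h0 : (fun y => C / (k + 1) * (y - p) ^ (k + 1) - s * g y) p = 0 := by
      simp [hgp]
    have := hmono (Set.left_mem_Icc.mpr hpx) (Set.right_mem_Icc.mpr hpx) hpx
    rw [h0] at this
    linarith
  have h1 := key 1 (Or.inl rfl)
  have h2 := key (-1) (Or.inr rfl)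
  have habs : |x - p| = x - p := abs_of_nonneg (by linarith)
  rw [habs]
  rw [abs_le]
  constructor <;> nlinarith

lemma mvt_poly (g g' : ℝ → ℝ) (p x C : ℝ) (k : ℕ)
    (hder : ∀ y ∈ Set.uIcc p x, HasDerivAt g (g' y) y)
    (hbd : ∀ y ∈ Set.uIcc p x, |g' y| ≤ C * |y - p| ^ k)
    (hgp : g p = 0) :
    |g x| ≤ C / (k + 1) * |x - p| ^ (k + 1) := by
  rcases le_total p x with hpx | hxp
  · rw [Set.uIcc_of_le hpx] at hder hbd
    exact mvt_poly_aux g g' p x C k hpx hder hbd hgp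
  · -- reflect
    have hres := mvt_poly_aux (fun y => g (2 * p - y)) (fun y => -g' (2 * p - y)) p (2 * p - x) C k
      (by linarith)
      (by
        intro y hy
        have hmem : 2 * p - y ∈ Set.uIcc p x := by
          rw [Set.uIcc_of_ge hxp]
          exact ⟨by linarith [hy.2], by linarith [hy.1]⟩
        have hinner : HasDerivAt (fun y : ℝ => 2 * p - y) (-1) y := by
          simpa using (hasDerivAt_id y).const_sub (2 * p)
        have := (hder _ hmem).comp y hinner
        simpa [Function.comp_def] using this)
      (by
        intro y hy
        have hmem : 2 * p - y ∈ Set.uIcc p x := by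
          rw [Set.uIcc_of_ge hxp]
          exact ⟨by linarith [hy.2], by linarith [hy.1]⟩
        have := hbd _ hmem
        have he : |2 * p - y - p| = |y - p| := by
          rw [show 2 * p - y - p = -(y - p) by ring, abs_neg]
        simp only [abs_neg]
        rw [← he]
        exact this)
      (by show g (2 * p - p) = 0; rw [show 2 * p - p = p by ring]; exact hgp)
    have he2 : |2 * p - x - p| = |x - p| := by
      rw [show 2 * p - x - p = -(x - p) by ring, abs_neg]
    rw [he2] at hres
    simpa using hres

end taylor
section rpowchain

lemma mem_uIcc_ge (m p x y : ℝ) (hp : m ≤ p) (hx : m ≤ x) (hy : y ∈ Set.uIcc p x) :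
    m ≤ y := le_trans (le_inf hp hx) hy.1

lemma rpow_taylor0 (β m p x : ℝ) (hm : 0 < m) (hβ : β ≤ 1) (hp : m ≤ p) (hx : m ≤ x) :
    |x ^ β - p ^ β| ≤ |β| * m ^ (β - 1) * |x - p| := by
  have key := mvt_poly (fun y => y ^ β - p ^ β) (fun y => β * y ^ (β - 1)) p x
      (|β| * m ^ (β - 1)) 0
      (by
        intro y hy
        have hym := mem_uIcc_ge m p x y hp hx hy
        have hy0 : y ≠ 0 := (lt_of_lt_of_le hm hym).ne'
        exact (Real.hasDerivAt_rpow_const (Or.inl hy0)).sub_const _)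
      (by
        intro y hy
        have hym := mem_uIcc_ge m p x y hp hx hy
        rw [pow_zero, mul_one, abs_mul]
        have h1 : |y ^ (β - 1)| ≤ m ^ (β - 1) := by
          rw [abs_of_nonneg (Real.rpow_nonneg (by linarith) _)]
          exact Real.rpow_le_rpow_of_nonpos hm hym (by linarith)
        exact mul_le_mul_of_nonneg_left h1 (abs_nonneg β))
      (by simp)
  simpa using key

lemma rpow_taylor1 (β m p x : ℝ) (hm : 0 < m) (hβ : β ≤ 2) (hp : m ≤ p) (hx : m ≤ x) :
    |x ^ β - p ^ β - β * p ^ (β - 1) * (x - p)|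
      ≤ |β| * |β - 1| * m ^ (β - 2) / 2 * |x - p| ^ 2 := by
  have key := mvt_poly (fun y => y ^ β - p ^ β - β * p ^ (β - 1) * (y - p))
      (fun y => β * (y ^ (β - 1) - p ^ (β - 1))) p x
      (|β| * (|β - 1| * m ^ (β - 2))) 1
      (by
        intro y hy
        have hym := mem_uIcc_ge m p x y hp hx hy
        have hy0 : y ≠ 0 := (lt_of_lt_of_le hm hym).ne'
        have hA := (Real.hasDerivAt_rpow_const (Or.inl hy0) (p := β)).sub_const (p ^ β)
        have hB := ((hasDerivAt_id y).sub_const p).const_mul (β * p ^ (β - 1))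
        have := hA.fun_sub hB
        refine this.congr_deriv ?_
        ring)
      (by
        intro y hy
        have hym := mem_uIcc_ge m p x y hp hx hy
        have h0 := rpow_taylor0 (β - 1) m p y hm (by linarith) hp hym
        rw [show β - 1 - 1 = β - 2 from by ring] at h0
        rw [abs_mul, pow_one]
        calc |β| * |y ^ (β - 1) - p ^ (β - 1)| ≤ |β| * (|β - 1| * m ^ (β - 2) * |y - p|) :=
              mul_le_mul_of_nonneg_left h0 (abs_nonneg β)
          _ = |β| * (|β - 1| * m ^ (β - 2)) * |y - p| := by ring)
      (by simp)
  refine key.trans_eq ?_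
  push_cast
  ring

lemma rpow_taylor2 (β m p x : ℝ) (hm : 0 < m) (hβ : β ≤ 3) (hp : m ≤ p) (hx : m ≤ x) :
    |x ^ β - p ^ β - β * p ^ (β - 1) * (x - p) - β * (β - 1) / 2 * p ^ (β - 2) * (x - p) ^ 2|
      ≤ |β| * |β - 1| * |β - 2| * m ^ (β - 3) / 6 * |x - p| ^ 3 := by
  have key := mvt_poly
      (fun y => y ^ β - p ^ β - β * p ^ (β - 1) * (y - p)
        - β * (β - 1) / 2 * p ^ (β - 2) * (y - p) ^ 2)
      (fun y => β * (y ^ (β - 1) - p ^ (β - 1) - (β - 1) * p ^ (β - 2) * (y - p))) p x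
      (|β| * (|β - 1| * |β - 2| * m ^ (β - 3) / 2)) 2
      (by
        intro y hy
        have hym := mem_uIcc_ge m p x y hp hx hy
        have hy0 : y ≠ 0 := (lt_of_lt_of_le hm hym).ne'
        have hA := (Real.hasDerivAt_rpow_const (Or.inl hy0) (p := β)).sub_const (p ^ β)
        have hB := ((hasDerivAt_id y).sub_const p).const_mul (β * p ^ (β - 1))
        have hC := (((hasDerivAt_id y).sub_const p).fun_pow 2).const_mul
          (β * (β - 1) / 2 * p ^ (β - 2))
        have := (hA.fun_sub hB).fun_sub hC
        refine this.congr_deriv ?_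
        norm_num
        ring)
      (by
        intro y hy
        have hym := mem_uIcc_ge m p x y hp hx hy
        have h0 := rpow_taylor1 (β - 1) m p y hm (by linarith) hp hym
        rw [show β - 1 - 1 = β - 2 from by ring, show β - 1 - 2 = β - 3 from by ring] at h0
        rw [abs_mul]
        calc |β| * |y ^ (β - 1) - p ^ (β - 1) - (β - 1) * p ^ (β - 2) * (y - p)|
            ≤ |β| * (|β - 1| * |β - 2| * m ^ (β - 3) / 2 * |y - p| ^ 2) :=
              mul_le_mul_of_nonneg_left h0 (abs_nonneg β)
          _ = |β| * (|β - 1| * |β - 2| * m ^ (β - 3) / 2) * |y - p| ^ 2 := by ring)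
      (by simp)
  refine key.trans_eq ?_
  push_cast
  ring

lemma rpow_taylor3 (β m p x : ℝ) (hm : 0 < m) (hβ : β ≤ 4) (hp : m ≤ p) (hx : m ≤ x) :
    |x ^ β - p ^ β - β * p ^ (β - 1) * (x - p) - β * (β - 1) / 2 * p ^ (β - 2) * (x - p) ^ 2
        - β * (β - 1) * (β - 2) / 6 * p ^ (β - 3) * (x - p) ^ 3|
      ≤ |β| * |β - 1| * |β - 2| * |β - 3| * m ^ (β - 4) / 24 * |x - p| ^ 4 := by
  have key := mvt_poly
      (fun y => y ^ β - p ^ β - β * p ^ (β - 1) * (y - p)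
        - β * (β - 1) / 2 * p ^ (β - 2) * (y - p) ^ 2
        - β * (β - 1) * (β - 2) / 6 * p ^ (β - 3) * (y - p) ^ 3)
      (fun y => β * (y ^ (β - 1) - p ^ (β - 1) - (β - 1) * p ^ (β - 2) * (y - p)
        - (β - 1) * (β - 2) / 2 * p ^ (β - 3) * (y - p) ^ 2)) p x
      (|β| * (|β - 1| * |β - 2| * |β - 3| * m ^ (β - 4) / 6)) 3
      (by
        intro y hy
        have hym := mem_uIcc_ge m p x y hp hx hy
        have hy0 : y ≠ 0 := (lt_of_lt_of_le hm hym).ne'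
        have hA := (Real.hasDerivAt_rpow_const (Or.inl hy0) (p := β)).sub_const (p ^ β)
        have hB := ((hasDerivAt_id y).sub_const p).const_mul (β * p ^ (β - 1))
        have hC := (((hasDerivAt_id y).sub_const p).fun_pow 2).const_mul
          (β * (β - 1) / 2 * p ^ (β - 2))
        have hD := (((hasDerivAt_id y).sub_const p).fun_pow 3).const_mul
          (β * (β - 1) * (β - 2) / 6 * p ^ (β - 3))
        have := ((hA.fun_sub hB).fun_sub hC).fun_sub hD
        refine this.congr_deriv ?_
        norm_num
        ring)
      (by
        intro y hy
        have hym := mem_uIcc_ge m p x y hp hx hy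
        have h0 := rpow_taylor2 (β - 1) m p y hm (by linarith) hp hym
        rw [show β - 1 - 1 = β - 2 from by ring, show β - 1 - 2 = β - 3 from by ring,
          show β - 1 - 3 = β - 4 from by ring] at h0
        rw [abs_mul]
        calc |β| * |y ^ (β - 1) - p ^ (β - 1) - (β - 1) * p ^ (β - 2) * (y - p)
              - (β - 1) * (β - 2) / 2 * p ^ (β - 3) * (y - p) ^ 2|
            ≤ |β| * (|β - 1| * |β - 2| * |β - 3| * m ^ (β - 4) / 6 * |y - p| ^ 3) :=
              mul_le_mul_of_nonneg_left h0 (abs_nonneg β)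
          _ = |β| * (|β - 1| * |β - 2| * |β - 3| * m ^ (β - 4) / 6) * |y - p| ^ 3 := by ring)
      (by simp)
  refine key.trans_eq ?_
  push_cast
  ring

end rpowchain
section interpfacts

lemma poly_nonneg (s : ℝ) (h0 : 0 ≤ s) (h1 : s ≤ 1) :
    0 ≤ 126 * s ^ 5 - 420 * s ^ 6 + 540 * s ^ 7 - 315 * s ^ 8 + 70 * s ^ 9 := by
  have key : 126 * s ^ 5 - 420 * s ^ 6 + 540 * s ^ 7 - 315 * s ^ 8 + 70 * s ^ 9
      = 126 * s ^ 5 * (1 - s) ^ 4 + 84 * s ^ 6 * (1 - s) ^ 3 + 36 * s ^ 7 * (1 - s) ^ 2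
        + 9 * s ^ 8 * (1 - s) + s ^ 9 := by ring
  rw [key]
  have hs : 0 ≤ 1 - s := by linarith
  positivity

lemma poly_le_one (s : ℝ) (h0 : 0 ≤ s) (h1 : s ≤ 1) :
    126 * s ^ 5 - 420 * s ^ 6 + 540 * s ^ 7 - 315 * s ^ 8 + 70 * s ^ 9 ≤ 1 := by
  have key : 1 - (126 * s ^ 5 - 420 * s ^ 6 + 540 * s ^ 7 - 315 * s ^ 8 + 70 * s ^ 9)
      = 126 * s ^ 4 * (1 - s) ^ 5 + 84 * s ^ 3 * (1 - s) ^ 6 + 36 * s ^ 2 * (1 - s) ^ 7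
        + 9 * s * (1 - s) ^ 8 + (1 - s) ^ 9 := by ring
  have hs : 0 ≤ 1 - s := by linarith
  nlinarith [key, sq_nonneg s, pow_nonneg h0 3, pow_nonneg hs 5, pow_nonneg hs 6,
    pow_nonneg hs 7, pow_nonneg hs 8, pow_nonneg hs 9, pow_nonneg h0 4, pow_nonneg h0 2,
    mul_nonneg (mul_nonneg (by norm_num : (0:ℝ) ≤ 126) (pow_nonneg h0 4)) (pow_nonneg hs 5),
    mul_nonneg (mul_nonneg (by norm_num : (0:ℝ) ≤ 84) (pow_nonneg h0 3)) (pow_nonneg hs 6),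
    mul_nonneg (mul_nonneg (by norm_num : (0:ℝ) ≤ 36) (pow_nonneg h0 2)) (pow_nonneg hs 7),
    mul_nonneg (mul_nonneg (by norm_num : (0:ℝ) ≤ 9) h0) (pow_nonneg hs 8)]

lemma interp_mem (t x : ℝ) (ht : 0 < t) : 0 ≤ interp t x ∧ interp t x ≤ 1 := by
  unfold interp
  split_ifs with h1 h2
  · norm_num
  · unfold gfun
    push_neg at h1
    set s := (x - t) / t with hs
    have hs0 : 0 ≤ s := le_of_lt (div_pos (by linarith) ht)
    have hs1 : s ≤ 1 := by
      rw [div_le_one ht]; linarith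
    exact ⟨poly_nonneg s hs0 hs1, poly_le_one s hs0 hs1⟩
  · norm_num

lemma interp_eq_one (t x : ℝ) (ht : 0 < t) (hx : 2 * t ≤ x) : interp t x = 1 := by
  unfold interp
  rw [if_neg (by linarith), if_neg (by linarith)]

end interpfacts
set_option maxHeartbeats 1000000

section pointwise

lemma coef_bound_4 (α : ℝ) (hα0 : 0 < α) (hα2 : α < 3 / 2) :
    |α| * |α - 1| * |α - 2| * |α - 3| ≤ 1 := by
  have h : |α| * |α - 1| * |α - 2| * |α - 3| = |α * (α - 1) * (α - 2) * (α - 3)| := by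
    rw [abs_mul, abs_mul, abs_mul]
  rw [h, abs_le]
  constructor
  · nlinarith [sq_nonneg (α ^ 2 - 3 * α + 1)]
  · nlinarith [sq_nonneg (α ^ 2 - 3 * α + 1), sq_nonneg (α - 3 / 2),
      mul_pos hα0 (show (0:ℝ) < 3 - α by linarith)]

lemma coef_bound_c (α : ℝ) (hα0 : 0 < α) (hα2 : α < 3 / 2) : |α * (1 - α)| ≤ 3 / 4 := by
  rw [abs_le]
  constructor <;> nlinarith [sq_nonneg (α - 1 / 2), sq_nonneg (α - 1)]

lemma abs_sub_le_abs_add_abs (a b : ℝ) : |a - b| ≤ |a| + |b| := by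
  rw [sub_eq_add_neg]
  exact (abs_add_le _ _).trans (by rw [abs_neg])

lemma pointwise_bound (n : ℕ) (c₁ α p : ℝ) (hn : 2 ≤ n) (hc₁ : 0 < c₁)
    (h1 : 1 ≤ c₁ * Real.log n)
    (hα0 : 0 < α) (hα2 : α < 3 / 2)
    (hp1 : c₁ * Real.log n / n ≤ p) (hp2 : p ≤ 1) (j : ℕ) :
    |Ualpha n (c₁ * Real.log n / n / 4) α ((j : ℝ) / n)
        - (p ^ α
          + (α * p ^ (α - 1) + α * (1 - α) / (2 * n) * (α - 1) * p ^ (α - 2))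
            * ((j : ℝ) / n - p)
          + α * (α - 1) / 2 * p ^ (α - 2) * ((j : ℝ) / n - p) ^ 2
          + α * (α - 1) * (α - 2) / 6 * p ^ (α - 3) * ((j : ℝ) / n - p) ^ 3
          + α * (1 - α) / (2 * n) * p ^ (α - 1))|
      ≤ 6 * p ^ α * Real.exp (Real.log 2 * ((n : ℝ) * p / 2 - j))
        + (2 / 3 * p ^ (α - 4) * ((j : ℝ) / n - p) ^ 4
          + 3 * p ^ (α - 3) / n * ((j : ℝ) / n - p) ^ 2) := by
  have hn0 : (0 : ℝ) < n := by positivity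
  have hp0 : 0 < p := lt_of_lt_of_le (by positivity) hp1
  have hnp1 : (1 : ℝ) ≤ (n : ℝ) * p := by
    have h2 : c₁ * Real.log n ≤ (n : ℝ) * p := by
      rw [div_le_iff₀ hn0] at hp1; linarith
    linarith
  have hpa0 : (0 : ℝ) ≤ p ^ α := Real.rpow_nonneg hp0.le α
  set x : ℝ := (j : ℝ) / n with hxdef
  set c : ℝ := α * (1 - α) / (2 * n) with hcdef
  have ep1 : p ^ (α - 1) * p = p ^ α := by
    have h := (Real.rpow_add_one hp0.ne' (α - 1)).symm
    rwa [show α - 1 + 1 = α by ring] at h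
  have ep2 : p ^ (α - 2) * p = p ^ (α - 1) := by
    have h := (Real.rpow_add_one hp0.ne' (α - 2)).symm
    rwa [show α - 2 + 1 = α - 1 by ring] at h
  have ep3 : p ^ (α - 3) * p = p ^ (α - 2) := by
    have h := (Real.rpow_add_one hp0.ne' (α - 3)).symm
    rwa [show α - 3 + 1 = α - 2 by ring] at h
  have hpm1 : (0:ℝ) ≤ p ^ (α - 1) := Real.rpow_nonneg hp0.le _
  have hpm2 : (0:ℝ) ≤ p ^ (α - 2) := Real.rpow_nonneg hp0.le _
  have hpm3 : (0:ℝ) ≤ p ^ (α - 3) := Real.rpow_nonneg hp0.le _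
  have hpm4 : (0:ℝ) ≤ p ^ (α - 4) := Real.rpow_nonneg hp0.le _
  have hpinv : p ^ (α - 1) ≤ n * p ^ α := by
    rw [← mul_le_mul_iff_left₀ hp0, ep1]
    nlinarith [hpa0, hnp1]
  have hcabs : |c| ≤ 3 / (8 * n) := by
    calc |c| = |α * (1 - α)| / (2 * n) := by
          rw [hcdef, abs_div, abs_of_pos (show (0:ℝ) < 2 * n by positivity)]
      _ ≤ (3 / 4) / (2 * n) := by gcongr; exact coef_bound_c α hα0 hα2
      _ = 3 / (8 * n) := by ring
  have hcnn : (0:ℝ) ≤ 3 / (8 * n) := by positivity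
  by_cases hj : (j : ℝ) < (n : ℝ) * p / 2
  · -- tail case
    have hexp1 : (1:ℝ) ≤ Real.exp (Real.log 2 * ((n : ℝ) * p / 2 - j)) := by
      have h0 : (0:ℝ) ≤ Real.log 2 * ((n : ℝ) * p / 2 - j) :=
        mul_nonneg (Real.log_nonneg one_le_two) (by linarith)
      calc (1:ℝ) = Real.exp 0 := Real.exp_zero.symm
        _ ≤ _ := Real.exp_le_exp.mpr h0
    have hx0 : (0:ℝ) ≤ x := by positivity
    have hxp2 : x < p / 2 := by
      rw [hxdef, div_lt_iff₀ hn0]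
      linarith
    have hxp : x ≤ p := by linarith
    have habsxp : |x - p| ≤ p := by
      rw [abs_le]; constructor <;> linarith
    have hBnn : (0:ℝ) ≤ 2 / 3 * p ^ (α - 4) * (x - p) ^ 4
        + 3 * p ^ (α - 3) / n * (x - p) ^ 2 := by positivity
    have hU : |Ualpha n (c₁ * Real.log n / n / 4) α x| ≤ 11 / 8 * p ^ α := by
      unfold Ualpha
      split_ifs with hx0'
      · simpa using by positivity
      · have hxpos : 0 < x := lt_of_le_of_ne hx0 (Ne.symm hx0')
        have ht0 : 0 < c₁ * Real.log n / n / 4 := by positivity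
        obtain ⟨hI0, hI1⟩ := interp_mem _ x ht0
        rw [abs_mul]
        have h1a : |interp (c₁ * Real.log n / n / 4) x| ≤ 1 := abs_le.mpr ⟨by linarith, hI1⟩
        have hxa : x ^ α ≤ p ^ α := Real.rpow_le_rpow hx0 hxp hα0.le
        have hxj1 : (1:ℝ) ≤ (j:ℝ) := by
          have hj0 : j ≠ 0 := by
            intro h; apply hx0'; rw [hxdef, h]; simp
          exact_mod_cast Nat.one_le_iff_ne_zero.mpr hj0
        have hx1n : 1 / (n:ℝ) ≤ x := by
          rw [hxdef]; gcongr
        have hxm1 : (0:ℝ) ≤ x ^ (α - 1) := Real.rpow_nonneg hx0 _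
        have hcx : |c| * x ^ (α - 1) ≤ 3 / 8 * p ^ α := by
          rcases le_total α 1 with hle | hge
          · have hd1 : x ^ (α - 1) ≤ (1 / (n:ℝ)) ^ (α - 1) :=
              Real.rpow_le_rpow_of_nonpos (by positivity) hx1n (by linarith)
            have hd2 : ((1:ℝ) / n) ^ (α - 1) = ((1:ℝ) / n) ^ α * n := by
              rw [show α - 1 = α + (-1) by ring, Real.rpow_add (by positivity),
                Real.rpow_neg_one]
              rw [one_div, inv_inv]
            have hd3 : ((1:ℝ) / n) ^ α ≤ p ^ α := by
              apply Real.rpow_le_rpow (by positivity) ?_ hα0.le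
              calc (1:ℝ) / n ≤ c₁ * Real.log n / n := by gcongr
                _ ≤ p := hp1
            calc |c| * x ^ (α - 1) ≤ (3 / (8 * n)) * (((1:ℝ) / n) ^ α * n) := by
                  apply mul_le_mul hcabs (hd1.trans_eq hd2) hxm1 hcnn
              _ = 3 / 8 * ((1:ℝ) / n) ^ α := by field_simp
              _ ≤ 3 / 8 * p ^ α := by
                  apply mul_le_mul_of_nonneg_left hd3 (by norm_num)
          · have hd1 : x ^ (α - 1) ≤ p ^ (α - 1) :=
              Real.rpow_le_rpow hx0 hxp (by linarith)
            calc |c| * x ^ (α - 1) ≤ (3 / (8 * n)) * p ^ (α - 1) :=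
                  mul_le_mul hcabs hd1 hxm1 hcnn
              _ ≤ (3 / (8 * n)) * (n * p ^ α) := by
                  apply mul_le_mul_of_nonneg_left hpinv hcnn
              _ = 3 / 8 * p ^ α := by field_simp
        have habssum : |x ^ α + c * x ^ (α - 1)| ≤ x ^ α + |c| * x ^ (α - 1) := by
          refine (abs_add_le _ _).trans ?_
          rw [abs_of_nonneg (Real.rpow_nonneg hx0 α), abs_mul,
            abs_of_nonneg hxm1]
        calc |interp (c₁ * Real.log n / n / 4) x| * |x ^ α + c * x ^ (α - 1)|
            ≤ 1 * |x ^ α + c * x ^ (α - 1)| :=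
              mul_le_mul_of_nonneg_right h1a (abs_nonneg _)
          _ = |x ^ α + c * x ^ (α - 1)| := one_mul _
          _ ≤ x ^ α + |c| * x ^ (α - 1) := habssum
          _ ≤ p ^ α + 3 / 8 * p ^ α := add_le_add hxa hcx
          _ ≤ 11 / 8 * p ^ α := by linarith
    -- bound |T|
    have hxp2sq : (x - p) ^ 2 ≤ p ^ 2 := by
      have h := pow_le_pow_left₀ (abs_nonneg (x - p)) habsxp 2
      rwa [sq_abs] at h
    have hxp3cube : |x - p| ^ 3 ≤ p ^ 3 := pow_le_pow_left₀ (abs_nonneg (x - p)) habsxp 3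
    have i1 : |p ^ α| = p ^ α := abs_of_nonneg hpa0
    have hC1 : |α * p ^ (α - 1) + c * (α - 1) * p ^ (α - 2)|
        ≤ α * p ^ (α - 1) + 3 / (8 * n) * p ^ (α - 2) := by
      refine (abs_add_le _ _).trans (add_le_add ?_ ?_)
      · rw [abs_mul, abs_of_pos hα0, abs_of_nonneg hpm1]
      · rw [abs_mul, abs_mul, abs_of_nonneg hpm2]
        have hα1 : |α - 1| ≤ 1 := abs_le.mpr ⟨by linarith, by linarith⟩
        calc |c| * |α - 1| * p ^ (α - 2) ≤ (3 / (8 * n)) * 1 * p ^ (α - 2) := by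
              apply mul_le_mul_of_nonneg_right ?_ hpm2
              exact mul_le_mul hcabs hα1 (abs_nonneg _) hcnn
          _ = 3 / (8 * n) * p ^ (α - 2) := by ring
    have i2 : |(α * p ^ (α - 1) + c * (α - 1) * p ^ (α - 2)) * (x - p)| ≤ 15 / 8 * p ^ α := by
      rw [abs_mul]
      calc |α * p ^ (α - 1) + c * (α - 1) * p ^ (α - 2)| * |x - p|
          ≤ (α * p ^ (α - 1) + 3 / (8 * n) * p ^ (α - 2)) * p := by
            apply mul_le_mul hC1 habsxp (abs_nonneg _)
            positivity
        _ = α * (p ^ (α - 1) * p) + 3 / (8 * n) * (p ^ (α - 2) * p) := by ring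
        _ = α * p ^ α + 3 / (8 * n) * p ^ (α - 1) := by rw [ep1, ep2]
        _ ≤ 3 / 2 * p ^ α + 3 / (8 * n) * (n * p ^ α) :=
            add_le_add (mul_le_mul_of_nonneg_right hα2.le hpa0)
              (mul_le_mul_of_nonneg_left hpinv hcnn)
        _ = 3 / 2 * p ^ α + 3 / 8 * p ^ α := by
            congr 1
            field_simp
        _ = 15 / 8 * p ^ α := by ring
    have i3 : |α * (α - 1) / 2 * p ^ (α - 2) * (x - p) ^ 2| ≤ 3 / 4 * p ^ α := by
      have hco : |α * (α - 1) / 2| ≤ 3 / 4 := by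
        rw [abs_div, abs_mul, abs_of_pos (show (0:ℝ) < 2 by norm_num)]
        have hα1 : |α - 1| ≤ 1 := abs_le.mpr ⟨by linarith, by linarith⟩
        have hαa : |α| ≤ 3 / 2 := abs_le.mpr ⟨by linarith, by linarith⟩
        calc |α| * |α - 1| / 2 ≤ (3 / 2) * 1 / 2 := by
              apply div_le_div_of_nonneg_right ?_ (by norm_num)
              exact mul_le_mul hαa hα1 (abs_nonneg _) (by norm_num)
          _ = 3 / 4 := by ring
      rw [abs_mul, abs_mul, abs_of_nonneg hpm2, abs_of_nonneg (sq_nonneg (x - p))]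
      calc |α * (α - 1) / 2| * p ^ (α - 2) * (x - p) ^ 2
          ≤ (3 / 4) * p ^ (α - 2) * p ^ 2 := by
            apply mul_le_mul (mul_le_mul_of_nonneg_right hco hpm2) hxp2sq (sq_nonneg _)
            positivity
        _ = (3 / 4) * (p ^ (α - 2) * p * p) := by ring
        _ = 3 / 4 * p ^ α := by rw [ep2, ep1]
    have i4 : |α * (α - 1) * (α - 2) / 6 * p ^ (α - 3) * (x - p) ^ 3| ≤ 1 / 2 * p ^ α := by
      have hco : |α * (α - 1) * (α - 2) / 6| ≤ 1 / 2 := by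
        rw [abs_div, abs_mul, abs_mul, abs_of_pos (show (0:ℝ) < 6 by norm_num)]
        have hα1 : |α - 1| ≤ 1 := abs_le.mpr ⟨by linarith, by linarith⟩
        have hαa : |α| ≤ 3 / 2 := abs_le.mpr ⟨by linarith, by linarith⟩
        have hα2' : |α - 2| ≤ 2 := abs_le.mpr ⟨by linarith, by linarith⟩
        calc |α| * |α - 1| * |α - 2| / 6 ≤ (3 / 2) * 1 * 2 / 6 := by
              apply div_le_div_of_nonneg_right ?_ (by norm_num)
              apply mul_le_mul ?_ hα2' (abs_nonneg _) (by norm_num)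
              exact mul_le_mul hαa hα1 (abs_nonneg _) (by norm_num)
          _ = 1 / 2 := by ring
      rw [abs_mul, abs_mul, abs_of_nonneg hpm3, abs_pow]
      calc |α * (α - 1) * (α - 2) / 6| * p ^ (α - 3) * |x - p| ^ 3
          ≤ (1 / 2) * p ^ (α - 3) * p ^ 3 := by
            apply mul_le_mul (mul_le_mul_of_nonneg_right hco hpm3) hxp3cube
              (by positivity) (by positivity)
        _ = (1 / 2) * (p ^ (α - 3) * p * p * p) := by ring
        _ = 1 / 2 * p ^ α := by rw [ep3, ep2, ep1]
    have i5 : |c * p ^ (α - 1)| ≤ 3 / 8 * p ^ α := by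
      rw [abs_mul, abs_of_nonneg hpm1]
      calc |c| * p ^ (α - 1) ≤ (3 / (8 * n)) * (n * p ^ α) := by
            apply mul_le_mul hcabs hpinv hpm1 hcnn
        _ = 3 / 8 * p ^ α := by field_simp
    have hT : |p ^ α
          + (α * p ^ (α - 1) + c * (α - 1) * p ^ (α - 2)) * (x - p)
          + α * (α - 1) / 2 * p ^ (α - 2) * (x - p) ^ 2
          + α * (α - 1) * (α - 2) / 6 * p ^ (α - 3) * (x - p) ^ 3
          + c * p ^ (α - 1)| ≤ 37 / 8 * p ^ α := by
      have k1 := abs_add_le (p ^ α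
          + (α * p ^ (α - 1) + c * (α - 1) * p ^ (α - 2)) * (x - p)
          + α * (α - 1) / 2 * p ^ (α - 2) * (x - p) ^ 2
          + α * (α - 1) * (α - 2) / 6 * p ^ (α - 3) * (x - p) ^ 3) (c * p ^ (α - 1))
      have k2 := abs_add_le (p ^ α
          + (α * p ^ (α - 1) + c * (α - 1) * p ^ (α - 2)) * (x - p)
          + α * (α - 1) / 2 * p ^ (α - 2) * (x - p) ^ 2)
          (α * (α - 1) * (α - 2) / 6 * p ^ (α - 3) * (x - p) ^ 3)
      have k3 := abs_add_le (p ^ α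
          + (α * p ^ (α - 1) + c * (α - 1) * p ^ (α - 2)) * (x - p))
          (α * (α - 1) / 2 * p ^ (α - 2) * (x - p) ^ 2)
      have k4 := abs_add_le (p ^ α)
          ((α * p ^ (α - 1) + c * (α - 1) * p ^ (α - 2)) * (x - p))
      linarith [i2, i3, i4, i5, i1.le]
    calc |Ualpha n (c₁ * Real.log n / n / 4) α x
          - (p ^ α + (α * p ^ (α - 1) + c * (α - 1) * p ^ (α - 2)) * (x - p)
            + α * (α - 1) / 2 * p ^ (α - 2) * (x - p) ^ 2
            + α * (α - 1) * (α - 2) / 6 * p ^ (α - 3) * (x - p) ^ 3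
            + c * p ^ (α - 1))|
        ≤ |Ualpha n (c₁ * Real.log n / n / 4) α x|
          + |p ^ α + (α * p ^ (α - 1) + c * (α - 1) * p ^ (α - 2)) * (x - p)
            + α * (α - 1) / 2 * p ^ (α - 2) * (x - p) ^ 2
            + α * (α - 1) * (α - 2) / 6 * p ^ (α - 3) * (x - p) ^ 3
            + c * p ^ (α - 1)| := abs_sub_le_abs_add_abs _ _
      _ ≤ 11 / 8 * p ^ α + 37 / 8 * p ^ α := add_le_add hU hT
      _ = 6 * p ^ α * 1 := by ring
      _ ≤ 6 * p ^ α * Real.exp (Real.log 2 * ((n : ℝ) * p / 2 - j)) := by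
          apply mul_le_mul_of_nonneg_left hexp1 (by positivity)
      _ ≤ _ := le_add_of_nonneg_right hBnn
  · -- main case
    push_neg at hj
    have hx_ge : p / 2 ≤ x := by
      rw [hxdef, le_div_iff₀ hn0]
      linarith
    have hm0 : 0 < p / 2 := by linarith
    have hx0 : x ≠ 0 := (hm0.trans_le hx_ge).ne'
    have hxt : 2 * (c₁ * Real.log n / n / 4) ≤ x := by
      have : c₁ * Real.log n / n / 2 ≤ p / 2 := by linarith
      calc 2 * (c₁ * Real.log n / n / 4) = c₁ * Real.log n / n / 2 := by ring
        _ ≤ p / 2 := this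
        _ ≤ x := hx_ge
    have ht0 : 0 < c₁ * Real.log n / n / 4 := by positivity
    have hUeq : Ualpha n (c₁ * Real.log n / n / 4) α x
        = x ^ α + c * x ^ (α - 1) := by
      unfold Ualpha
      rw [if_neg hx0, interp_eq_one _ _ ht0 hxt, one_mul]
    rw [hUeq]
    have hsplit : x ^ α + c * x ^ (α - 1)
        - (p ^ α + (α * p ^ (α - 1) + c * (α - 1) * p ^ (α - 2)) * (x - p)
          + α * (α - 1) / 2 * p ^ (α - 2) * (x - p) ^ 2
          + α * (α - 1) * (α - 2) / 6 * p ^ (α - 3) * (x - p) ^ 3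
          + c * p ^ (α - 1))
        = (x ^ α - p ^ α - α * p ^ (α - 1) * (x - p)
            - α * (α - 1) / 2 * p ^ (α - 2) * (x - p) ^ 2
            - α * (α - 1) * (α - 2) / 6 * p ^ (α - 3) * (x - p) ^ 3)
          + c * (x ^ (α - 1) - p ^ (α - 1) - (α - 1) * p ^ (α - 2) * (x - p)) := by
      ring
    rw [hsplit]
    have hR3 := rpow_taylor3 α (p / 2) p x hm0 (by linarith) (by linarith) hx_ge
    have hR1 := rpow_taylor1 (α - 1) (p / 2) p x hm0 (by linarith) (by linarith) hx_ge
    rw [show α - 1 - 1 = α - 2 from by ring, show α - 1 - 2 = α - 3 from by ring] at hR1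
    have hpow4 : (p / 2) ^ (α - 4) ≤ 16 * p ^ (α - 4) := by
      rw [show p / 2 = p * (1 / 2) by ring, Real.mul_rpow hp0.le (by norm_num)]
      have h2 : ((1:ℝ) / 2) ^ (α - 4) = (2:ℝ) ^ (4 - α) := by
        rw [one_div, Real.inv_rpow (by norm_num : (0:ℝ) ≤ 2),
          ← Real.rpow_neg (by norm_num : (0:ℝ) ≤ 2)]
        congr 1
        ring
      rw [h2]
      have h3 : (2:ℝ) ^ (4 - α) ≤ (2:ℝ) ^ (4:ℝ) :=
        Real.rpow_le_rpow_of_exponent_le one_le_two (by linarith)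
      have h4 : (2:ℝ) ^ (4:ℝ) = 16 := by
        rw [show (4:ℝ) = ((4:ℕ):ℝ) by norm_num, Real.rpow_natCast]
        norm_num
      calc p ^ (α - 4) * (2:ℝ) ^ (4 - α) ≤ p ^ (α - 4) * 16 := by
            apply mul_le_mul_of_nonneg_left (h3.trans_eq h4) hpm4
        _ = 16 * p ^ (α - 4) := by ring
    have hpow3 : (p / 2) ^ (α - 3) ≤ 8 * p ^ (α - 3) := by
      rw [show p / 2 = p * (1 / 2) by ring, Real.mul_rpow hp0.le (by norm_num)]
      have h2 : ((1:ℝ) / 2) ^ (α - 3) = (2:ℝ) ^ (3 - α) := by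
        rw [one_div, Real.inv_rpow (by norm_num : (0:ℝ) ≤ 2),
          ← Real.rpow_neg (by norm_num : (0:ℝ) ≤ 2)]
        congr 1
        ring
      rw [h2]
      have h3 : (2:ℝ) ^ (3 - α) ≤ (2:ℝ) ^ (3:ℝ) :=
        Real.rpow_le_rpow_of_exponent_le one_le_two (by linarith)
      have h4 : (2:ℝ) ^ (3:ℝ) = 8 := by
        rw [show (3:ℝ) = ((3:ℕ):ℝ) by norm_num, Real.rpow_natCast]
        norm_num
      calc p ^ (α - 3) * (2:ℝ) ^ (3 - α) ≤ p ^ (α - 3) * 8 := by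
            apply mul_le_mul_of_nonneg_left (h3.trans_eq h4) hpm3
        _ = 8 * p ^ (α - 3) := by ring
    have habs4 : |x - p| ^ 4 = (x - p) ^ 4 := by
      rw [← abs_pow, abs_of_nonneg (by positivity)]
    have habs2 : |x - p| ^ 2 = (x - p) ^ 2 := sq_abs _
    have hb3 : |x ^ α - p ^ α - α * p ^ (α - 1) * (x - p)
          - α * (α - 1) / 2 * p ^ (α - 2) * (x - p) ^ 2
          - α * (α - 1) * (α - 2) / 6 * p ^ (α - 3) * (x - p) ^ 3|
        ≤ 2 / 3 * p ^ (α - 4) * (x - p) ^ 4 := by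
      refine hR3.trans ?_
      rw [habs4]
      have hcoef := coef_bound_4 α hα0 hα2
      have h5 : |α| * |α - 1| * |α - 2| * |α - 3| * (p / 2) ^ (α - 4) / 24
          ≤ 1 * (16 * p ^ (α - 4)) / 24 := by
        apply div_le_div_of_nonneg_right ?_ (by norm_num)
        apply mul_le_mul hcoef hpow4 (Real.rpow_nonneg (by positivity) _) (by norm_num)
      calc |α| * |α - 1| * |α - 2| * |α - 3| * (p / 2) ^ (α - 4) / 24 * (x - p) ^ 4
          ≤ 1 * (16 * p ^ (α - 4)) / 24 * (x - p) ^ 4 :=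
            mul_le_mul_of_nonneg_right h5 (by positivity)
        _ = 2 / 3 * p ^ (α - 4) * (x - p) ^ 4 := by ring
    have hb1 : |c * (x ^ (α - 1) - p ^ (α - 1) - (α - 1) * p ^ (α - 2) * (x - p))|
        ≤ 3 * p ^ (α - 3) / n * (x - p) ^ 2 := by
      rw [abs_mul]
      have hα1 : |α - 1| ≤ 1 := abs_le.mpr ⟨by linarith, by linarith⟩
      have hα2' : |α - 2| ≤ 2 := abs_le.mpr ⟨by linarith, by linarith⟩
      have h5 : |α - 1| * |α - 2| * (p / 2) ^ (α - 3) / 2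
          ≤ 1 * 2 * (8 * p ^ (α - 3)) / 2 := by
        apply div_le_div_of_nonneg_right ?_ (by norm_num)
        apply mul_le_mul ?_ hpow3 (Real.rpow_nonneg (by positivity) _) (by norm_num)
        exact mul_le_mul hα1 hα2' (abs_nonneg _) (by norm_num)
      have h6 : |x ^ (α - 1) - p ^ (α - 1) - (α - 1) * p ^ (α - 2) * (x - p)|
          ≤ 8 * p ^ (α - 3) * (x - p) ^ 2 := by
        refine hR1.trans ?_
        rw [habs2]
        calc |α - 1| * |α - 2| * (p / 2) ^ (α - 3) / 2 * (x - p) ^ 2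
            ≤ 1 * 2 * (8 * p ^ (α - 3)) / 2 * (x - p) ^ 2 :=
              mul_le_mul_of_nonneg_right h5 (by positivity)
          _ = 8 * p ^ (α - 3) * (x - p) ^ 2 := by ring
      calc |c| * |x ^ (α - 1) - p ^ (α - 1) - (α - 1) * p ^ (α - 2) * (x - p)|
          ≤ (3 / (8 * n)) * (8 * p ^ (α - 3) * (x - p) ^ 2) :=
            mul_le_mul hcabs h6 (abs_nonneg _) hcnn
        _ = 3 * p ^ (α - 3) / n * (x - p) ^ 2 := by field_simp
    have hAnn : (0:ℝ) ≤ 6 * p ^ α * Real.exp (Real.log 2 * ((n : ℝ) * p / 2 - j)) := by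
      positivity
    calc |(x ^ α - p ^ α - α * p ^ (α - 1) * (x - p)
            - α * (α - 1) / 2 * p ^ (α - 2) * (x - p) ^ 2
            - α * (α - 1) * (α - 2) / 6 * p ^ (α - 3) * (x - p) ^ 3)
          + c * (x ^ (α - 1) - p ^ (α - 1) - (α - 1) * p ^ (α - 2) * (x - p))|
        ≤ |x ^ α - p ^ α - α * p ^ (α - 1) * (x - p)
            - α * (α - 1) / 2 * p ^ (α - 2) * (x - p) ^ 2
            - α * (α - 1) * (α - 2) / 6 * p ^ (α - 3) * (x - p) ^ 3|
          + |c * (x ^ (α - 1) - p ^ (α - 1) - (α - 1) * p ^ (α - 2) * (x - p))| :=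
          abs_add_le _ _
      _ ≤ 2 / 3 * p ^ (α - 4) * (x - p) ^ 4 + 3 * p ^ (α - 3) / n * (x - p) ^ 2 :=
          add_le_add hb3 hb1
      _ ≤ _ := le_add_of_nonneg_left hAnn

end pointwise
theorem Ualpha_bias_bound (n : ℕ) (hn : 2 ≤ n) (c₁ : ℝ) (hc₁ : 0 < c₁)
    (h1 : 1 ≤ c₁ * Real.log n) (h2 : c₁ * Real.log n ≤ (n : ℝ))
    (α : ℝ) (hα0 : 0 < α) (hα2 : α < 3 / 2)
    (p : ℝ) (hp1 : c₁ * Real.log n / n ≤ p) (hp2 : p ≤ 1) :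
    |(∑' j : ℕ, Real.exp (-((n : ℝ) * p)) * ((n : ℝ) * p) ^ j / (Nat.factorial j : ℝ) *
          Ualpha n (c₁ * Real.log n / n / 4) α ((j : ℝ) / (n : ℝ))) - p ^ α|
      ≤ 17 / ((n : ℝ) ^ α * (c₁ * Real.log n) ^ (2 - α))
        + (8310 * (1 + α) / (α * (2 - α))) * p ^ α * (n : ℝ) ^ (-(c₁ / 8)) := by
  have hn0 : (0 : ℝ) < n := by positivity
  have hp0 : 0 < p := lt_of_lt_of_le (by positivity) hp1
  have hL0 : (0 : ℝ) < c₁ * Real.log n := by linarith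
  have hlamL : c₁ * Real.log n ≤ (n : ℝ) * p := by
    rw [div_le_iff₀ hn0] at hp1; linarith
  have hnp1 : (1 : ℝ) ≤ (n : ℝ) * p := by linarith
  have hnp0 : (0 : ℝ) < (n : ℝ) * p := by linarith
  have hpa0 : (0 : ℝ) ≤ p ^ α := Real.rpow_nonneg hp0.le α
  have ep2 : p ^ (α - 2) * p = p ^ (α - 1) := by
    have h := (Real.rpow_add_one hp0.ne' (α - 2)).symm
    rwa [show α - 2 + 1 = α - 1 by ring] at h
  have ep3 : p ^ (α - 3) * p = p ^ (α - 2) := by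
    have h := (Real.rpow_add_one hp0.ne' (α - 3)).symm
    rwa [show α - 3 + 1 = α - 2 by ring] at h
  have ep4 : p ^ (α - 4) * p = p ^ (α - 3) := by
    have h := (Real.rpow_add_one hp0.ne' (α - 4)).symm
    rwa [show α - 4 + 1 = α - 3 by ring] at h
  have hpm2 : (0:ℝ) ≤ p ^ (α - 2) := Real.rpow_nonneg hp0.le _
  have hpm3 : (0:ℝ) ≤ p ^ (α - 3) := Real.rpow_nonneg hp0.le _
  have hpm4 : (0:ℝ) ≤ p ^ (α - 4) := Real.rpow_nonneg hp0.le _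
  -- moments
  obtain ⟨S0, T0⟩ := wmom_of n hn0 p 0 1 (cmom0 ((n:ℝ) * p))
  obtain ⟨S1, T1⟩ := wmom_of n hn0 p 1 0 (cmom1 ((n:ℝ) * p))
  obtain ⟨S2, T2⟩ := wmom_of n hn0 p 2 ((n:ℝ) * p) (cmom2 ((n:ℝ) * p))
  obtain ⟨S3, T3⟩ := wmom_of n hn0 p 3 ((n:ℝ) * p) (cmom3 ((n:ℝ) * p))
  obtain ⟨S4, T4⟩ := wmom_of n hn0 p 4 (3 * ((n:ℝ) * p) ^ 2 + (n:ℝ) * p) (cmom4 ((n:ℝ) * p))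
  obtain ⟨SC, TC⟩ := chernoff_sum ((n:ℝ) * p)
  -- the T function
  set fT : ℕ → ℝ := fun j => Real.exp (-((n : ℝ) * p)) * ((n : ℝ) * p) ^ j / (Nat.factorial j : ℝ)
      * (p ^ α
        + (α * p ^ (α - 1) + α * (1 - α) / (2 * n) * (α - 1) * p ^ (α - 2)) * ((j : ℝ) / n - p)
        + α * (α - 1) / 2 * p ^ (α - 2) * ((j : ℝ) / n - p) ^ 2
        + α * (α - 1) * (α - 2) / 6 * p ^ (α - 3) * ((j : ℝ) / n - p) ^ 3
        + α * (1 - α) / (2 * n) * p ^ (α - 1)) with hfT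
  have eT : fT = fun j : ℕ =>
      (p ^ α + α * (1 - α) / (2 * n) * p ^ (α - 1))
        * (Real.exp (-((n : ℝ) * p)) * ((n : ℝ) * p) ^ j / (Nat.factorial j : ℝ)
            * ((j : ℝ) / n - p) ^ 0)
      + ((α * p ^ (α - 1) + α * (1 - α) / (2 * n) * (α - 1) * p ^ (α - 2))
          * (Real.exp (-((n : ℝ) * p)) * ((n : ℝ) * p) ^ j / (Nat.factorial j : ℝ)
              * ((j : ℝ) / n - p) ^ 1)
        + (α * (α - 1) / 2 * p ^ (α - 2)
            * (Real.exp (-((n : ℝ) * p)) * ((n : ℝ) * p) ^ j / (Nat.factorial j : ℝ)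
                * ((j : ℝ) / n - p) ^ 2)
          + α * (α - 1) * (α - 2) / 6 * p ^ (α - 3)
            * (Real.exp (-((n : ℝ) * p)) * ((n : ℝ) * p) ^ j / (Nat.factorial j : ℝ)
                * ((j : ℝ) / n - p) ^ 3))) := by
    funext j; rw [hfT]; ring
  have ST : Summable fT := by
    rw [eT]
    exact (S0.mul_left _).add ((S1.mul_left _).add ((S2.mul_left _).add (S3.mul_left _)))
  have TT : ∑' j, fT j = p ^ α + α * (α - 1) * (α - 2) / 6 * (p ^ (α - 3) * p) / (n : ℝ) ^ 2 := by
    rw [eT, Summable.tsum_add (S0.mul_left _) ((S1.mul_left _).add ((S2.mul_left _).add (S3.mul_left _))),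
      Summable.tsum_add (S1.mul_left _) ((S2.mul_left _).add (S3.mul_left _)),
      Summable.tsum_add (S2.mul_left _) (S3.mul_left _),
      tsum_mul_left, tsum_mul_left, tsum_mul_left, tsum_mul_left, T0, T1, T2, T3]
    rw [← ep2]
    field_simp
    ring
  -- bound functions
  set fU : ℕ → ℝ := fun j => Real.exp (-((n : ℝ) * p)) * ((n : ℝ) * p) ^ j
      / (Nat.factorial j : ℝ) * Ualpha n (c₁ * Real.log n / n / 4) α ((j : ℝ) / (n : ℝ))
    with hfU
  set fA : ℕ → ℝ := fun j => 6 * p ^ α *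
      (Real.exp (-((n:ℝ) * p)) * ((n:ℝ) * p) ^ j / (Nat.factorial j : ℝ)
        * Real.exp (Real.log 2 * ((n:ℝ) * p / 2 - (j:ℝ)))) with hfA
  set fB : ℕ → ℝ := fun j => 2 / 3 * p ^ (α - 4) *
      (Real.exp (-((n:ℝ) * p)) * ((n:ℝ) * p) ^ j / (Nat.factorial j : ℝ) * ((j:ℝ) / n - p) ^ 4)
      + 3 * p ^ (α - 3) / n *
      (Real.exp (-((n:ℝ) * p)) * ((n:ℝ) * p) ^ j / (Nat.factorial j : ℝ) * ((j:ℝ) / n - p) ^ 2)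
    with hfB
  have SfA : Summable fA := SC.mul_left _
  have SfB : Summable fB := (S4.mul_left _).add (S2.mul_left _)
  have habs : ∀ j, |fU j - fT j| ≤ fA j + fB j := by
    intro j
    have hw : (0:ℝ) ≤ Real.exp (-((n:ℝ) * p)) * ((n:ℝ) * p) ^ j / (Nat.factorial j : ℝ) := by
      positivity
    have hpb := pointwise_bound n c₁ α p hn hc₁ h1 hα0 hα2 hp1 hp2 j
    have e1 : fU j - fT j = (Real.exp (-((n:ℝ) * p)) * ((n:ℝ) * p) ^ j / (Nat.factorial j : ℝ))
        * (Ualpha n (c₁ * Real.log n / n / 4) α ((j : ℝ) / n)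
          - (p ^ α
            + (α * p ^ (α - 1) + α * (1 - α) / (2 * n) * (α - 1) * p ^ (α - 2))
              * ((j : ℝ) / n - p)
            + α * (α - 1) / 2 * p ^ (α - 2) * ((j : ℝ) / n - p) ^ 2
            + α * (α - 1) * (α - 2) / 6 * p ^ (α - 3) * ((j : ℝ) / n - p) ^ 3
            + α * (1 - α) / (2 * n) * p ^ (α - 1))) := by
      rw [hfU, hfT]; ring
    rw [e1, abs_mul, abs_of_nonneg hw]
    calc (Real.exp (-((n:ℝ) * p)) * ((n:ℝ) * p) ^ j / (Nat.factorial j : ℝ)) * |_| ≤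
        (Real.exp (-((n:ℝ) * p)) * ((n:ℝ) * p) ^ j / (Nat.factorial j : ℝ)) *
          (6 * p ^ α * Real.exp (Real.log 2 * ((n : ℝ) * p / 2 - j))
            + (2 / 3 * p ^ (α - 4) * ((j : ℝ) / n - p) ^ 4
              + 3 * p ^ (α - 3) / n * ((j : ℝ) / n - p) ^ 2)) :=
          mul_le_mul_of_nonneg_left hpb hw
      _ = fA j + fB j := by rw [hfA, hfB]; ring
  have habs' : Summable (fun j => |fU j - fT j|) :=
    Summable.of_nonneg_of_le (fun j => abs_nonneg _) habs (SfA.add SfB)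
  have hsub : Summable (fun j => fU j - fT j) := summable_abs_iff.mp habs'
  have SU : Summable fU := by
    have e2 : (fun j => (fU j - fT j) + fT j) = fU := funext fun j => by ring
    rw [← e2]; exact hsub.add ST
  have hDle : |∑' j, (fU j - fT j)| ≤ (∑' j, fA j) + (∑' j, fB j) := by
    calc |∑' j, (fU j - fT j)| ≤ ∑' j, |fU j - fT j| := by
          have := norm_tsum_le_tsum_norm (f := fun j => fU j - fT j)
            (by simpa [Real.norm_eq_abs] using habs')
          simpa [Real.norm_eq_abs] using this
      _ ≤ ∑' j, (fA j + fB j) := Summable.tsum_le_tsum habs habs' (SfA.add SfB)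
      _ = (∑' j, fA j) + (∑' j, fB j) := Summable.tsum_add SfA SfB
  have hDval : ∑' j, (fU j - fT j) = (∑' j, fU j) - ∑' j, fT j := Summable.tsum_sub SU ST
  -- value of the A-sum and its bound
  have TAval : ∑' j, fA j = 6 * p ^ α *
      (Real.exp (-((n:ℝ) * p)) * Real.exp (Real.log 2 * ((n:ℝ) * p / 2))
        * Real.exp ((n:ℝ) * p / 2)) := by
    rw [hfA, tsum_mul_left, TC]
  have hexpbound : Real.exp (-((n:ℝ) * p)) * Real.exp (Real.log 2 * ((n:ℝ) * p / 2))
      * Real.exp ((n:ℝ) * p / 2) ≤ (n:ℝ) ^ (-(c₁ / 8)) := by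
    rw [← Real.exp_add, ← Real.exp_add]
    have hlog2 : Real.log 2 ≤ 3 / 4 :=
      le_of_lt (lt_of_lt_of_le Real.log_two_lt_d9 (by norm_num))
    have hrw : (n:ℝ) ^ (-(c₁ / 8)) = Real.exp (Real.log n * (-(c₁ / 8))) :=
      Real.rpow_def_of_pos hn0 _
    rw [hrw]
    apply Real.exp_le_exp.mpr
    have hee : Real.log n * (-(c₁ / 8)) = -(c₁ * Real.log n) / 8 := by ring
    rw [hee]
    nlinarith [mul_nonneg (show (0:ℝ) ≤ 3 / 4 - Real.log 2 by linarith)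
      (show (0:ℝ) ≤ (n:ℝ) * p / 2 by linarith)]
  have hcoefA : (6:ℝ) ≤ 8310 * (1 + α) / (α * (2 - α)) := by
    rw [le_div_iff₀ (by nlinarith : (0:ℝ) < α * (2 - α))]
    nlinarith
  have hAfinal : ∑' j, fA j ≤ 8310 * (1 + α) / (α * (2 - α)) * p ^ α * (n:ℝ) ^ (-(c₁ / 8)) := by
    rw [TAval]
    calc 6 * p ^ α *
        (Real.exp (-((n:ℝ) * p)) * Real.exp (Real.log 2 * ((n:ℝ) * p / 2))
          * Real.exp ((n:ℝ) * p / 2))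
        ≤ 6 * p ^ α * (n:ℝ) ^ (-(c₁ / 8)) :=
          mul_le_mul_of_nonneg_left hexpbound (by positivity)
      _ ≤ 8310 * (1 + α) / (α * (2 - α)) * p ^ α * (n:ℝ) ^ (-(c₁ / 8)) := by
          apply mul_le_mul_of_nonneg_right ?_ (by positivity)
          exact mul_le_mul_of_nonneg_right hcoefA hpa0
  -- value of the B-sum
  have TBval : ∑' j, fB j = 2 / 3 * p ^ (α - 4) * ((3 * ((n:ℝ) * p) ^ 2 + (n:ℝ) * p) / (n:ℝ) ^ 4)
      + 3 * p ^ (α - 3) / n * (((n:ℝ) * p) / (n:ℝ) ^ 2) := by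
    rw [hfB, Summable.tsum_add (S4.mul_left _) (S2.mul_left _), tsum_mul_left, tsum_mul_left, T4, T2]
  -- bound on the error terms
  have hθ : |α * (α - 1) * (α - 2) / 6 * (p ^ (α - 3) * p) / (n : ℝ) ^ 2|
      ≤ 1 / 2 * (p ^ (α - 2) / (n:ℝ) ^ 2) := by
    rw [ep3, abs_div, abs_of_pos (show (0:ℝ) < (n:ℝ) ^ 2 by positivity), abs_mul,
      abs_of_nonneg hpm2]
    have hco : |α * (α - 1) * (α - 2) / 6| ≤ 1 / 2 := by
      rw [abs_div, abs_mul, abs_mul, abs_of_pos (show (0:ℝ) < 6 by norm_num)]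
      have hb1 : |α - 1| ≤ 1 := abs_le.mpr ⟨by linarith, by linarith⟩
      have hba : |α| ≤ 3 / 2 := abs_le.mpr ⟨by linarith, by linarith⟩
      have hb2 : |α - 2| ≤ 2 := abs_le.mpr ⟨by linarith, by linarith⟩
      calc |α| * |α - 1| * |α - 2| / 6 ≤ (3 / 2) * 1 * 2 / 6 := by
            apply div_le_div_of_nonneg_right ?_ (by norm_num)
            apply mul_le_mul ?_ hb2 (abs_nonneg _) (by norm_num)
            exact mul_le_mul hba hb1 (abs_nonneg _) (by norm_num)
        _ = 1 / 2 := by ring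
    calc |α * (α - 1) * (α - 2) / 6| * p ^ (α - 2) / (n:ℝ) ^ 2
        ≤ (1 / 2) * p ^ (α - 2) / (n:ℝ) ^ 2 :=
          div_le_div_of_nonneg_right (mul_le_mul_of_nonneg_right hco hpm2) (by positivity)
      _ = 1 / 2 * (p ^ (α - 2) / (n:ℝ) ^ 2) := by ring
  have hBθ : ((∑' j, fB j) + |α * (α - 1) * (α - 2) / 6 * (p ^ (α - 3) * p) / (n : ℝ) ^ 2|)
      ≤ 17 / ((n:ℝ) ^ α * (c₁ * Real.log n) ^ (2 - α)) := by
    rw [TBval]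
    have e3 : 2 / 3 * p ^ (α - 4) * ((3 * ((n:ℝ) * p) ^ 2 + (n:ℝ) * p) / (n:ℝ) ^ 4)
        + 3 * p ^ (α - 3) / n * (((n:ℝ) * p) / (n:ℝ) ^ 2)
        = 2 * (p ^ (α - 4) * p * p) / (n:ℝ) ^ 2 + 2 / 3 * (p ^ (α - 4) * p) / (n:ℝ) ^ 3
          + 3 * (p ^ (α - 3) * p) / (n:ℝ) ^ 2 := by
      field_simp
    rw [e3, ep4, ep3]
    -- now everything is in terms of p^(α-2)/n² and p^(α-3)/n³
    have hLn0 : (0:ℝ) < c₁ * Real.log n / n := by positivity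
    have hP2 : p ^ (α - 2) ≤ (c₁ * Real.log n / n) ^ (α - 2) :=
      Real.rpow_le_rpow_of_nonpos hLn0 hp1 (by linarith)
    have hP3 : p ^ (α - 3) ≤ (c₁ * Real.log n / n) ^ (α - 3) :=
      Real.rpow_le_rpow_of_nonpos hLn0 hp1 (by linarith)
    have eL2 : (c₁ * Real.log n / n) ^ (α - 2) / (n:ℝ) ^ 2
        = (c₁ * Real.log n) ^ (α - 2) / (n:ℝ) ^ α := by
      rw [Real.div_rpow hL0.le hn0.le, div_div]
      congr 1
      rw [show ((n:ℝ) ^ 2 : ℝ) = (n:ℝ) ^ ((2:ℕ):ℝ) from (Real.rpow_natCast _ 2).symm,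
        ← Real.rpow_add hn0]
      congr 1
      push_cast
      ring
    have eL3 : (c₁ * Real.log n / n) ^ (α - 3) / (n:ℝ) ^ 3
        = (c₁ * Real.log n) ^ (α - 3) / (n:ℝ) ^ α := by
      rw [Real.div_rpow hL0.le hn0.le, div_div]
      congr 1
      rw [show ((n:ℝ) ^ 3 : ℝ) = (n:ℝ) ^ ((3:ℕ):ℝ) from (Real.rpow_natCast _ 3).symm,
        ← Real.rpow_add hn0]
      congr 1
      push_cast
      ring
    have hLmono : (c₁ * Real.log n) ^ (α - 3) ≤ (c₁ * Real.log n) ^ (α - 2) :=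
      Real.rpow_le_rpow_of_exponent_le h1 (by linarith)
    have d1 : p ^ (α - 2) / (n:ℝ) ^ 2 ≤ (c₁ * Real.log n) ^ (α - 2) / (n:ℝ) ^ α := by
      calc p ^ (α - 2) / (n:ℝ) ^ 2 ≤ (c₁ * Real.log n / n) ^ (α - 2) / (n:ℝ) ^ 2 :=
            div_le_div_of_nonneg_right hP2 (by positivity)
        _ = _ := eL2
    have d2 : p ^ (α - 3) / (n:ℝ) ^ 3 ≤ (c₁ * Real.log n) ^ (α - 2) / (n:ℝ) ^ α := by
      calc p ^ (α - 3) / (n:ℝ) ^ 3 ≤ (c₁ * Real.log n / n) ^ (α - 3) / (n:ℝ) ^ 3 :=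
            div_le_div_of_nonneg_right hP3 (by positivity)
        _ = (c₁ * Real.log n) ^ (α - 3) / (n:ℝ) ^ α := eL3
        _ ≤ _ := div_le_div_of_nonneg_right hLmono (by positivity)
    have efin : (c₁ * Real.log n) ^ (α - 2) / (n:ℝ) ^ α
        = 1 / ((n:ℝ) ^ α * (c₁ * Real.log n) ^ (2 - α)) := by
      rw [show α - 2 = -(2 - α) by ring, Real.rpow_neg hL0.le]
      have h1' : (0:ℝ) < (n:ℝ) ^ α := Real.rpow_pos_of_pos hn0 α
      have h2' : (0:ℝ) < (c₁ * Real.log n) ^ (2 - α) := Real.rpow_pos_of_pos hL0 _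
      field_simp
    rw [ep3] at hθ
    calc 2 * p ^ (α - 2) / (n:ℝ) ^ 2 + 2 / 3 * p ^ (α - 3) / (n:ℝ) ^ 3
          + 3 * p ^ (α - 2) / (n:ℝ) ^ 2
          + |α * (α - 1) * (α - 2) / 6 * p ^ (α - 2) / (n : ℝ) ^ 2|
        ≤ 2 * (p ^ (α - 2) / (n:ℝ) ^ 2) + 2 / 3 * (p ^ (α - 3) / (n:ℝ) ^ 3)
          + 3 * (p ^ (α - 2) / (n:ℝ) ^ 2) + 1 / 2 * (p ^ (α - 2) / (n:ℝ) ^ 2) := by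
          have e4 : 2 * p ^ (α - 2) / (n:ℝ) ^ 2 = 2 * (p ^ (α - 2) / (n:ℝ) ^ 2) := by ring
          have e5 : 2 / 3 * p ^ (α - 3) / (n:ℝ) ^ 3 = 2 / 3 * (p ^ (α - 3) / (n:ℝ) ^ 3) := by
            ring
          have e6 : 3 * p ^ (α - 2) / (n:ℝ) ^ 2 = 3 * (p ^ (α - 2) / (n:ℝ) ^ 2) := by ring
          linarith [hθ]
      _ ≤ 2 * ((c₁ * Real.log n) ^ (α - 2) / (n:ℝ) ^ α)
          + 2 / 3 * ((c₁ * Real.log n) ^ (α - 2) / (n:ℝ) ^ α)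
          + 3 * ((c₁ * Real.log n) ^ (α - 2) / (n:ℝ) ^ α)
          + 1 / 2 * ((c₁ * Real.log n) ^ (α - 2) / (n:ℝ) ^ α) := by
          have hd1 := d1
          have hd2 := d2
          gcongr
      _ = (37 / 6) * ((c₁ * Real.log n) ^ (α - 2) / (n:ℝ) ^ α) := by ring
      _ = (37 / 6) * (1 / ((n:ℝ) ^ α * (c₁ * Real.log n) ^ (2 - α))) := by rw [efin]
      _ ≤ 17 / ((n:ℝ) ^ α * (c₁ * Real.log n) ^ (2 - α)) := by
          rw [mul_one_div]
          apply div_le_div_of_nonneg_right (by norm_num) (by positivity)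
  -- final assembly
  have hfinal : (∑' j, fU j) - p ^ α = (∑' j, (fU j - fT j))
      + α * (α - 1) * (α - 2) / 6 * (p ^ (α - 3) * p) / (n : ℝ) ^ 2 := by
    rw [hDval, TT]; ring
  calc |(∑' j, fU j) - p ^ α|
      = |(∑' j, (fU j - fT j)) + α * (α - 1) * (α - 2) / 6 * (p ^ (α - 3) * p) / (n : ℝ) ^ 2| := by
        rw [hfinal]
    _ ≤ |∑' j, (fU j - fT j)| + |α * (α - 1) * (α - 2) / 6 * (p ^ (α - 3) * p) / (n : ℝ) ^ 2| :=
        abs_add_le _ _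
    _ ≤ ((∑' j, fA j) + (∑' j, fB j))
        + |α * (α - 1) * (α - 2) / 6 * (p ^ (α - 3) * p) / (n : ℝ) ^ 2| := by
        linarith [hDle]
    _ ≤ 17 / ((n : ℝ) ^ α * (c₁ * Real.log n) ^ (2 - α))
        + (8310 * (1 + α) / (α * (2 - α))) * p ^ α * (n : ℝ) ^ (-(c₁ / 8)) := by
        linarith [hAfinal, hBθ]
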